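/- For every probability distribution q on X whose support is contained in the support of p, one has E_{x∼q}[v(x)] − λ·KL(q‖p) ≤ λ·log(Σ_{x∈X} p(x)·exp(v(x)/λ)). In particular, the supremum over all such q of E_q[v] − λ·KL(q‖p) equals λ·log(Σ_{x∈X} p(x)·exp(v(x)/λ)). -/

import Mathlib

open Classical

/-- For every probability distribution `q` on a finite nonempty set `X`
whose support is contained in the support of `p`, one has
`E_{x∼q}[v(x)] − λ·KL(q‖p) ≤ λ·log(Σ_x p(x)·exp(v(x)/λ))`, and the supremum over all
such `q` of this quantity equals `λ·log(Σ_x p(x)·exp(v(x)/λ))`. -/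
theorem statement0 {X : Type} [Fintype X] [Nonempty X]
    (p : X → ℝ) (hp0 : ∀ x, 0 ≤ p x) (hp1 : ∑ x : X, p x = 1)
    (v : X → ℝ) (lam : ℝ) (hlam : 0 < lam) :
    (∀ q : X → ℝ, (∀ x, 0 ≤ q x) → (∑ x : X, q x = 1) → (∀ x, 0 < q x → 0 < p x) →
      (∑ x : X, q x * v x) -
          lam * ∑ x ∈ Finset.univ.filter (fun x => 0 < q x), q x * Real.log (q x / p x)
        ≤ lam * Real.log (∑ x : X, p x * Real.exp (v x / lam))) ∧
    sSup {r : ℝ | ∃ q : X → ℝ, (∀ x, 0 ≤ q x) ∧ (∑ x : X, q x = 1) ∧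
        (∀ x, 0 < q x → 0 < p x) ∧
        r = (∑ x : X, q x * v x) -
          lam * ∑ x ∈ Finset.univ.filter (fun x => 0 < q x), q x * Real.log (q x / p x)}
      = lam * Real.log (∑ x : X, p x * Real.exp (v x / lam)) := by
  set Z := ∑ x : X, p x * Real.exp (v x / lam) with hZdef
  have hZpos : 0 < Z := by
    obtain ⟨x, hx⟩ : ∃ x, 0 < p x := by
      by_contra h
      push_neg at h
      have h0 : ∑ x : X, p x = 0 :=
        Finset.sum_eq_zero (fun x _ => le_antisymm (h x) (hp0 x))
      rw [h0] at hp1; norm_num at hp1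
    exact Finset.sum_pos' (fun x _ => mul_nonneg (hp0 x) (Real.exp_pos _).le)
      ⟨x, Finset.mem_univ x, mul_pos hx (Real.exp_pos _)⟩
  have key : ∀ q : X → ℝ, (∀ x, 0 ≤ q x) → (∑ x : X, q x = 1) → (∀ x, 0 < q x → 0 < p x) →
      (∑ x : X, q x * v x) -
          lam * ∑ x ∈ Finset.univ.filter (fun x => 0 < q x), q x * Real.log (q x / p x)
        ≤ lam * Real.log Z := by
    intro q hq0 hq1 hqp
    set S := Finset.univ.filter (fun x => 0 < q x) with hS
    have hmemS : ∀ x, x ∈ S ↔ 0 < q x := by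
      intro x; simp [hS]
    have hsumS : ∑ x ∈ S, q x = 1 := by
      rw [← hq1]
      apply Finset.sum_subset (Finset.subset_univ _)
      intro x _ hx
      rw [hmemS] at hx
      exact le_antisymm (not_lt.mp hx) (hq0 x)
    have hvS : ∑ x ∈ S, q x * v x = ∑ x : X, q x * v x := by
      apply Finset.sum_subset (Finset.subset_univ _)
      intro x _ hx
      rw [hmemS] at hx
      have : q x = 0 := le_antisymm (not_lt.mp hx) (hq0 x)
      simp [this]
    have hpt : ∀ x ∈ S, q x * (v x / lam - Real.log (q x / p x) - Real.log Z)
        ≤ p x * Real.exp (v x / lam) / Z - q x := by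
      intro x hx
      rw [hmemS] at hx
      have hpx : 0 < p x := hqp x hx
      have harg : 0 < p x * Real.exp (v x / lam) / (Z * q x) :=
        div_pos (mul_pos hpx (Real.exp_pos _)) (mul_pos hZpos hx)
      have hlog := Real.log_le_sub_one_of_pos harg
      have heq : Real.log (p x * Real.exp (v x / lam) / (Z * q x))
          = v x / lam - Real.log (q x / p x) - Real.log Z := by
        rw [Real.log_div (by positivity) (by positivity),
          Real.log_mul hpx.ne' (Real.exp_pos _).ne', Real.log_exp,
          Real.log_mul hZpos.ne' hx.ne', Real.log_div hx.ne' hpx.ne']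
        ring
      rw [heq] at hlog
      calc q x * (v x / lam - Real.log (q x / p x) - Real.log Z)
          ≤ q x * (p x * Real.exp (v x / lam) / (Z * q x) - 1) :=
            mul_le_mul_of_nonneg_left hlog hx.le
        _ = p x * Real.exp (v x / lam) / Z - q x := by
            field_simp
    have hsum1 : ∑ x ∈ S, (p x * Real.exp (v x / lam) / Z - q x) ≤ 0 := by
      rw [Finset.sum_sub_distrib, hsumS]
      have h2 : ∑ x ∈ S, p x * Real.exp (v x / lam) / Z ≤ Z / Z := by
        rw [← Finset.sum_div]
        apply (div_le_div_iff_of_pos_right hZpos).mpr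
        exact Finset.sum_le_sum_of_subset_of_nonneg (Finset.subset_univ _)
          (fun x _ _ => mul_nonneg (hp0 x) (Real.exp_pos _).le)
      rw [div_self hZpos.ne'] at h2
      linarith
    have H : ∑ x ∈ S, q x * (v x / lam - Real.log (q x / p x) - Real.log Z) ≤ 0 :=
      le_trans (Finset.sum_le_sum hpt) hsum1
    have hexp : ∑ x ∈ S, q x * (v x / lam - Real.log (q x / p x) - Real.log Z)
        = (∑ x : X, q x * v x) / lam - (∑ x ∈ S, q x * Real.log (q x / p x))
          - Real.log Z := by
      simp only [mul_sub]
      rw [Finset.sum_sub_distrib, Finset.sum_sub_distrib, ← Finset.sum_mul, hsumS, one_mul,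
        ← hvS, Finset.sum_div]
      congr 1
      congr 1
      exact Finset.sum_congr rfl (fun x _ => (mul_div_assoc _ _ _).symm)
    rw [hexp] at H
    have h3 : (∑ x : X, q x * v x) ≤
        ((∑ x ∈ S, q x * Real.log (q x / p x)) + Real.log Z) * lam :=
      (div_le_iff₀ hlam).mp (by linarith)
    nlinarith [h3]
  refine ⟨key, ?_⟩
  -- the maximizer
  set q : X → ℝ := fun x => p x * Real.exp (v x / lam) / Z with hq
  have hq0 : ∀ x, 0 ≤ q x := fun x => by
    simp only [hq]; exact div_nonneg (mul_nonneg (hp0 x) (Real.exp_pos _).le) hZpos.le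
  have hq1 : ∑ x : X, q x = 1 := by
    rw [hq]
    simp only []
    rw [← Finset.sum_div, ← hZdef, div_self hZpos.ne']
  have hqp : ∀ x, 0 < q x → 0 < p x := by
    intro x hx
    rcases (hp0 x).lt_or_eq with h | h
    · exact h
    · exfalso; rw [hq] at hx; simp [← h] at hx
  have hqpos_iff : ∀ x, 0 < q x ↔ 0 < p x := by
    intro x
    constructor
    · exact hqp x
    · intro h; exact div_pos (mul_pos h (Real.exp_pos _)) hZpos
  set S := Finset.univ.filter (fun x => 0 < q x) with hS
  have hmemS : ∀ x, x ∈ S ↔ 0 < q x := by intro x; simp [hS]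
  have hsumS : ∑ x ∈ S, q x = 1 := by
    rw [← hq1]
    apply Finset.sum_subset (Finset.subset_univ _)
    intro x _ hx
    rw [hmemS] at hx
    exact le_antisymm (not_lt.mp hx) (hq0 x)
  have hvS : ∑ x ∈ S, q x * v x = ∑ x : X, q x * v x := by
    apply Finset.sum_subset (Finset.subset_univ _)
    intro x _ hx
    rw [hmemS] at hx
    have : q x = 0 := le_antisymm (not_lt.mp hx) (hq0 x)
    simp [this]
  have hlogq : ∀ x ∈ S, q x * Real.log (q x / p x) = q x * (v x / lam) - q x * Real.log Z := by
    intro x hx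
    rw [hmemS] at hx
    have hpx : 0 < p x := hqp x hx
    have : q x / p x = Real.exp (v x / lam) / Z := by
      rw [hq]; field_simp
    rw [this, Real.log_div (Real.exp_pos _).ne' hZpos.ne', Real.log_exp]
    ring
  have hval : (∑ x : X, q x * v x) -
      lam * ∑ x ∈ Finset.univ.filter (fun x => 0 < q x), q x * Real.log (q x / p x)
      = lam * Real.log Z := by
    rw [← hS, Finset.sum_congr rfl hlogq, Finset.sum_sub_distrib, ← Finset.sum_mul, hsumS,
      one_mul]
    have h4 : ∑ x ∈ S, q x * (v x / lam) = (∑ x : X, q x * v x) / lam := by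
      rw [← hvS, Finset.sum_div]
      exact Finset.sum_congr rfl (fun x _ => (mul_div_assoc _ _ _).symm)
    rw [h4]
    field_simp
    ring
  apply le_antisymm
  · apply csSup_le
    · exact ⟨_, q, hq0, hq1, hqp, hval.symm⟩
    · rintro r ⟨q', h0, h1, h2, rfl⟩
      exact key q' h0 h1 h2
  · apply le_csSup
    · refine ⟨lam * Real.log Z, ?_⟩
      rintro r ⟨q', h0, h1, h2, rfl⟩
      exact key q' h0 h1 h2
    · exact ⟨q, hq0, hq1, hqp, hval.symm⟩
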